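/- Let K and L be convex bodies in ℝⁿ, both containing the origin. Then vol(conv(K ∪ (−L))) · vol((K° + L°)°) ≤ vol(K) · vol(L), where A° = {y ∈ ℝⁿ : ⟨x, y⟩ ≤ 1 for all x ∈ A} denotes the polar body of A with respect to the standard inner product. -/

import Mathlib

open MeasureTheory Set Pointwise
open scoped RealInnerProductSpace

/-- The polar body of a set `A ⊆ ℝⁿ`: all `y` with `⟪x, y⟫ ≤ 1` for every `x ∈ A`. -/
def polarBody {n : ℕ} (A : Set (EuclideanSpace ℝ (Fin n))) :
    Set (EuclideanSpace ℝ (Fin n)) :=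
  {y | ∀ x ∈ A, ⟪x, y⟫ ≤ 1}

open Filter Real Module
open scoped ENNReal

section EgAux

variable {E : Type*} [NormedAddCommGroup E] [NormedSpace ℝ E]

/-- `exp (-gauge A x)` as an extended-real-valued supremum. -/
noncomputable def egAux (A : Set E) (x : E) : ℝ≥0∞ :=
  ⨆ (r : ℝ) (_ : 0 < r) (_ : x ∈ r • A), ENNReal.ofReal (Real.exp (-r))

lemma le_egAux {A : Set E} {x : E} {r : ℝ} (hr : 0 < r) (hx : x ∈ r • A) :
    ENNReal.ofReal (Real.exp (-r)) ≤ egAux A x :=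
  le_iSup_of_le r (le_iSup_of_le hr (le_iSup_of_le hx le_rfl))

lemma egAux_le_one {A : Set E} (x : E) : egAux A x ≤ 1 := by
  refine iSup_le fun r => iSup_le fun hr => iSup_le fun _ => ?_
  rw [show (1 : ℝ≥0∞) = ENNReal.ofReal (Real.exp (-0)) by simp]
  exact ENNReal.ofReal_le_ofReal (Real.exp_le_exp.2 (by linarith))

lemma smul_set_mono_scalar {A : Set E} (hA : Convex ℝ A) (h0 : 0 ∈ A) {r s : ℝ}
    (hr : 0 < r) (hrs : r ≤ s) : r • A ⊆ s • A := by
  rintro x ⟨a, ha, rfl⟩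
  have hs : 0 < s := lt_of_lt_of_le hr hrs
  have hmem : (r / s) • a ∈ A :=
    hA.smul_mem_of_zero_mem h0 ha ⟨by positivity, div_le_one_of_le₀ hrs hs.le⟩
  refine ⟨(r / s) • a, hmem, ?_⟩
  show s • ((r/s) • a) = r • a
  rw [smul_smul, mul_div_cancel₀ _ hs.ne']

lemma ofReal_exp_le_of_forall_lt {S : ℝ≥0∞} {r : ℝ}
    (h : ∀ s : ℝ, r < s → ENNReal.ofReal (Real.exp (-s)) ≤ S) :
    ENNReal.ofReal (Real.exp (-r)) ≤ S := by
  have h1 : Tendsto (fun k : ℕ => r + 1 / (k + 1 : ℝ)) atTop (nhds r) := by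
    simpa using tendsto_const_nhds.add (tendsto_one_div_add_atTop_nhds_zero_nat (𝕜 := ℝ))
  have h2 : Tendsto (fun k : ℕ => ENNReal.ofReal (Real.exp (-(r + 1 / (k + 1 : ℝ)))))
      atTop (nhds (ENNReal.ofReal (Real.exp (-r)))) :=
    (ENNReal.continuous_ofReal.tendsto _).comp
      ((Real.continuous_exp.tendsto _).comp h1.neg)
  refine le_of_tendsto h2 (Eventually.of_forall fun k => h _ ?_)
  have : 0 < 1 / (k + 1 : ℝ) := by positivity
  linarith

lemma lintegral_exp_Ioi (a : ℝ) :
    ∫⁻ r in Ioi a, ENNReal.ofReal (Real.exp (-r)) = ENNReal.ofReal (Real.exp (-a)) := by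
  rw [← ofReal_integral_eq_lintegral_ofReal]
  · rw [integral_exp_neg_Ioi]
  · have := exp_neg_integrableOn_Ioi a one_pos; simp at this; exact this
  · exact Eventually.of_forall fun x => (Real.exp_pos _).le

lemma egAux_eq_setLIntegral {A : Set E} (hA : Convex ℝ A) (h0 : 0 ∈ A) (x : E) :
    egAux A x = ∫⁻ r in {s : ℝ | 0 < s ∧ x ∈ s • A}, ENNReal.ofReal (Real.exp (-r)) := by
  set T : Set ℝ := {s : ℝ | 0 < s ∧ x ∈ s • A} with hT
  rcases T.eq_empty_or_nonempty with hemp | hne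
  · rw [hemp]
    simp only [Measure.restrict_empty, lintegral_zero_measure]
    refine le_antisymm (iSup_le fun r => iSup_le fun hr => iSup_le fun hx => ?_) (zero_le)
    exact absurd (⟨hr, hx⟩ : r ∈ T) (by intro hmem; exact notMem_empty r (hemp ▸ hmem))
  · have hbdd : BddBelow T := ⟨0, fun r hr => hr.1.le⟩
    set G := sInf T with hG
    have hG0 : 0 ≤ G := le_csInf hne fun r hr => hr.1.le
    have hup : Ioi G ⊆ T := by
      intro r hr
      obtain ⟨t, ht, htr⟩ := (csInf_lt_iff hbdd hne).1 hr
      exact ⟨lt_trans ht.1 htr, smul_set_mono_scalar hA h0 ht.1 htr.le ht.2⟩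
    have hsub : T ⊆ Ici G := fun r hr => csInf_le hbdd hr
    have hae : T =ᵐ[volume] Ioi G := by
      rw [MeasureTheory.ae_eq_set]
      constructor
      · refine measure_mono_null (fun r hr => ?_) (volume_singleton (a := G))
        rcases hr with ⟨h1, h2⟩
        exact mem_singleton_iff.2 (le_antisymm (not_lt.1 h2) (hsub h1))
      · rw [diff_eq_empty.2 hup, measure_empty]
    rw [setLIntegral_congr hae, lintegral_exp_Ioi]
    refine le_antisymm (iSup_le fun r => iSup_le fun hr => iSup_le fun hx => ?_) ?_
    · exact ENNReal.ofReal_le_ofReal (Real.exp_le_exp.2 (by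
        have : G ≤ r := hsub ⟨hr, hx⟩; linarith))
    · exact ofReal_exp_le_of_forall_lt fun s hs => le_egAux (lt_of_le_of_lt hG0 hs) (hup hs).2

lemma lintegral_exp_rpow (d : ℕ) :
    ∫⁻ r in Ioi (0:ℝ), ENNReal.ofReal (Real.exp (-r) * r ^ d)
      = ENNReal.ofReal (Nat.factorial d : ℝ) := by
  have h1 : (0:ℝ) < d + 1 := by positivity
  have h2 := Real.Gamma_eq_integral h1
  have h3 : ∀ x ∈ Ioi (0:ℝ), Real.exp (-x) * x ^ ((d:ℝ) + 1 - 1) = Real.exp (-x) * x ^ d := by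
    intro x _
    rw [add_sub_cancel_right, Real.rpow_natCast]
  rw [← ofReal_integral_eq_lintegral_ofReal]
  · rw [← setIntegral_congr_fun measurableSet_Ioi h3, ← h2, Real.Gamma_nat_eq_factorial]
  · exact (Real.GammaIntegral_convergent h1).congr_fun h3 measurableSet_Ioi
  · filter_upwards [ae_restrict_mem measurableSet_Ioi] with x hx
    have : (0:ℝ) < x := hx
    positivity

lemma egAux_mul_le {A : Set E} (hA : Convex ℝ A) {u : E} {a : ℝ} (ha : 0 ≤ a)
    (hu : u ∈ a • A) (z : E) :
    ENNReal.ofReal (Real.exp (-a)) * egAux A z ≤ egAux A (z + u) := by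
  have key : ∀ r : ℝ, 0 < r → z ∈ r • A →
      ENNReal.ofReal (Real.exp (-a)) * ENNReal.ofReal (Real.exp (-r)) ≤ egAux A (z + u) := by
    intro r hr hx
    rw [← ENNReal.ofReal_mul (Real.exp_pos _).le, ← Real.exp_add,
      show -a + -r = -(r + a) by ring]
    refine le_egAux (by linarith) ?_
    rw [hA.add_smul hr.le ha]
    exact Set.add_mem_add hx hu
  rw [egAux, ENNReal.mul_iSup]
  refine iSup_le fun r => ?_
  rw [ENNReal.mul_iSup]
  refine iSup_le fun hr => ?_
  rw [ENNReal.mul_iSup]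
  exact iSup_le fun hx => key r hr hx

lemma egAux_eq_rat {A : Set E} (hA : Convex ℝ A) (h0 : 0 ∈ A) (x : E) :
    egAux A x = ⨆ (q : ℚ) (_ : 0 < (q:ℝ)) (_ : x ∈ (q:ℝ) • A),
      ENNReal.ofReal (Real.exp (-(q:ℝ))) := by
  refine le_antisymm ?_ (iSup_le fun q => iSup_le fun hq => iSup_le fun hx => le_egAux hq hx)
  refine iSup_le fun r => iSup_le fun hr => iSup_le fun hx => ?_
  refine ofReal_exp_le_of_forall_lt fun s hs => ?_
  obtain ⟨q, hq1, hq2⟩ := exists_rat_btwn hs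
  have hq0 : 0 < (q:ℝ) := lt_trans hr hq1
  have hmem : x ∈ (q:ℝ) • A := smul_set_mono_scalar hA h0 hr hq1.le hx
  have hstep : ENNReal.ofReal (Real.exp (-(q:ℝ))) ≤
      ⨆ (q : ℚ) (_ : 0 < (q:ℝ)) (_ : x ∈ (q:ℝ) • A), ENNReal.ofReal (Real.exp (-(q:ℝ))) :=
    le_iSup_of_le q (le_iSup_of_le hq0 (le_iSup_of_le hmem le_rfl))
  exact le_trans (ENNReal.ofReal_le_ofReal (Real.exp_le_exp.2 (by linarith))) hstep

lemma measurable_egAux [MeasurableSpace E] [BorelSpace E] {A : Set E}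
    (hA : Convex ℝ A) (h0 : 0 ∈ A) (hm : MeasurableSet A) : Measurable (egAux A) := by
  have heq : egAux A = fun x => ⨆ (q : ℚ) (_ : 0 < (q:ℝ)) (_ : x ∈ (q:ℝ) • A),
      ENNReal.ofReal (Real.exp (-(q:ℝ))) := funext fun x => egAux_eq_rat hA h0 x
  rw [heq]
  refine Measurable.iSup fun q => ?_
  by_cases hq : 0 < (q:ℝ)
  · have hqA : MeasurableSet ((q:ℝ) • A) := by
      have : (q:ℝ) • A = (fun x : E => (q:ℝ)⁻¹ • x) ⁻¹' A := by
        ext y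
        exact mem_smul_set_iff_inv_smul_mem₀ (ne_of_gt hq) _ _
      rw [this]
      exact (measurable_const_smul _) hm
    have heq2 : (fun x : E => ⨆ (_ : 0 < (q:ℝ)) (_ : x ∈ (q:ℝ) • A),
        ENNReal.ofReal (Real.exp (-(q:ℝ))))
        = ((q:ℝ) • A).indicator (fun _ => ENNReal.ofReal (Real.exp (-(q:ℝ)))) := by
      funext x
      by_cases hx : x ∈ (q:ℝ) • A
      · simp [hq, hx]
      · simp [hq, hx]
    rw [heq2]
    exact measurable_const.indicator hqA
  · have heq2 : (fun x : E => ⨆ (_ : 0 < (q:ℝ)) (_ : x ∈ (q:ℝ) • A),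
        ENNReal.ofReal (Real.exp (-(q:ℝ)))) = fun _ => 0 := by
      funext x; simp [hq]
    rw [heq2]
    exact measurable_const

lemma lintegral_egAux [MeasurableSpace E] [BorelSpace E] [FiniteDimensional ℝ E]
    (μ : Measure E) [μ.IsAddHaarMeasure] {A : Set E}
    (hA : Convex ℝ A) (h0 : 0 ∈ A) (hm : MeasurableSet A) :
    ∫⁻ x, egAux A x ∂μ = ENNReal.ofReal (Nat.factorial (finrank ℝ E) : ℝ) * μ A := by
  set d := finrank ℝ E with hd
  set W : Set (E × ℝ) := {q : E × ℝ | q.2⁻¹ • q.1 ∈ A} with hW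
  set g : E × ℝ → ℝ≥0∞ :=
    fun p => W.indicator (fun q => ENNReal.ofReal (Real.exp (-q.2))) p with hg
  have hWmeas : MeasurableSet W := (measurable_snd.inv.smul measurable_fst) hm
  have hgmeas : Measurable g := by
    apply Measurable.indicator _ hWmeas
    exact (measurable_snd.neg.exp).ennreal_ofReal
  have step1 : ∀ x : E, egAux A x = ∫⁻ r in Ioi (0:ℝ), g (x, r) := by
    intro x
    rw [egAux_eq_setLIntegral hA h0 x]
    have hS : MeasurableSet {s : ℝ | s⁻¹ • x ∈ A} := (measurable_inv.smul measurable_const) hm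
    have h2 : ∫⁻ r in Ioi (0:ℝ), g (x, r) =
        ∫⁻ r in {s : ℝ | s⁻¹ • x ∈ A} ∩ Ioi 0, ENNReal.ofReal (Real.exp (-r)) := by
      rw [hg]
      have hfun : (fun r : ℝ =>
            W.indicator (fun q : E × ℝ => ENNReal.ofReal (Real.exp (-q.2))) (x, r))
          = fun r : ℝ => ({s : ℝ | s⁻¹ • x ∈ A}).indicator
              (fun s => ENNReal.ofReal (Real.exp (-s))) r := by
        funext r
        by_cases hr : r⁻¹ • x ∈ A
        · rw [Set.indicator_of_mem (by exact hr), Set.indicator_of_mem (by exact hr)]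
        · rw [Set.indicator_of_notMem (by exact hr), Set.indicator_of_notMem (by exact hr)]
      rw [hfun, lintegral_indicator hS, Measure.restrict_restrict hS]
    rw [h2]
    apply setLIntegral_congr
    apply Filter.EventuallyEq.of_eq
    ext r
    constructor
    · rintro ⟨h1, h2⟩
      exact ⟨(mem_smul_set_iff_inv_smul_mem₀ (ne_of_gt h1) _ _).1 h2, mem_Ioi.2 h1⟩
    · rintro ⟨h1, h2⟩
      exact ⟨mem_Ioi.1 h2, (mem_smul_set_iff_inv_smul_mem₀ (ne_of_gt (mem_Ioi.1 h2)) _ _).2 h1⟩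
  calc ∫⁻ x, egAux A x ∂μ = ∫⁻ x, (∫⁻ r in Ioi (0:ℝ), g (x, r)) ∂μ := lintegral_congr step1
    _ = ∫⁻ r in Ioi (0:ℝ), (∫⁻ x, g (x, r) ∂μ) := by
        apply lintegral_lintegral_swap
        exact hgmeas.aemeasurable
    _ = ∫⁻ r in Ioi (0:ℝ), ENNReal.ofReal (Real.exp (-r) * r ^ d) * μ A := by
        apply setLIntegral_congr_fun measurableSet_Ioi
        intro r hr
        have hr0 : (0:ℝ) < r := hr
        have hset : {y : E | (y, r) ∈ W} = r • A := by
          ext y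
          simp only [hW, mem_setOf_eq]
          exact (mem_smul_set_iff_inv_smul_mem₀ (ne_of_gt hr0) _ _).symm
        have hrA : MeasurableSet (r • A) := by
          rw [← hset]
          exact ((measurable_id.prodMk measurable_const : Measurable fun y : E => (y, r))) hWmeas
        have hinner : ∫⁻ x, g (x, r) ∂μ = ENNReal.ofReal (Real.exp (-r)) * μ (r • A) := by
          rw [hg]
          have hfun : (fun x : E =>
              W.indicator (fun q : E × ℝ => ENNReal.ofReal (Real.exp (-q.2))) (x, r))
              = fun x : E => (r • A).indicator (fun _ => ENNReal.ofReal (Real.exp (-r))) x := by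
            funext x
            by_cases hx : (x, r) ∈ W
            · have hx' : x ∈ r • A := by rw [← hset]; exact hx
              rw [Set.indicator_of_mem hx, Set.indicator_of_mem hx']
            · have hx' : x ∉ r • A := by rw [← hset]; exact hx
              rw [Set.indicator_of_notMem hx, Set.indicator_of_notMem hx']
          rw [hfun, lintegral_indicator_const hrA]
        beta_reduce
        rw [hinner, Measure.addHaar_smul, abs_of_pos (by positivity), ← hd,
          ENNReal.ofReal_mul (by positivity), mul_assoc]
    _ = (∫⁻ r in Ioi (0:ℝ), ENNReal.ofReal (Real.exp (-r) * r ^ d)) * μ A := by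
        rw [lintegral_mul_const]
        exact ((measurable_neg.exp).mul (measurable_id.pow_const d)).ennreal_ofReal
    _ = ENNReal.ofReal (Nat.factorial d : ℝ) * μ A := by rw [lintegral_exp_rpow]

lemma C_decomp {K L : Set E} (hKconv : Convex ℝ K) (hLconv : Convex ℝ L)
    (hK0 : (0:E) ∈ K) (hL0 : (0:E) ∈ L) {d : E} {ρ : ℝ} (hρ : 0 < ρ)
    (hd : d ∈ ρ • convexHull ℝ (K ∪ -L)) :
    ∃ a b : ℝ, ∃ u v : E, 0 ≤ a ∧ 0 ≤ b ∧ a + b = ρ ∧ u ∈ a • K ∧ v ∈ b • L ∧ d = u - v := by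
  obtain ⟨cpt, hcpt, rfl⟩ := hd
  rw [hKconv.convexHull_union (hLconv.neg) ⟨0, hK0⟩ ⟨0, by simpa using hL0⟩] at hcpt
  rw [mem_convexJoin] at hcpt
  obtain ⟨x, hx, y, hy, hseg⟩ := hcpt
  obtain ⟨a', b', ha', hb', hab, habeq⟩ := hseg
  refine ⟨ρ * a', ρ * b', (ρ * a') • x, (ρ * b') • (-y), by positivity, by positivity,
    ?_, ?_, ?_, ?_⟩
  · rw [← mul_add, hab, mul_one]
  · exact smul_mem_smul_set hx
  · exact smul_mem_smul_set (by simpa using hy)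
  · rw [← habeq]
    module

lemma isCompact_convexHull_union {K L : Set E} (hKc : IsCompact K) (hLc : IsCompact L)
    (hKconv : Convex ℝ K) (hLconv : Convex ℝ L) (hKne : K.Nonempty) (hLne : L.Nonempty) :
    IsCompact (convexHull ℝ (K ∪ -L)) := by
  rw [hKconv.convexHull_union hLconv.neg hKne (by simpa using hLne.neg)]
  have heq : convexJoin ℝ K (-L) =
      (fun p : ℝ × E × E => (1 - p.1) • p.2.1 + p.1 • p.2.2) '' (Icc (0:ℝ) 1 ×ˢ K ×ˢ (-L)) := by
    ext z
    rw [mem_convexJoin]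
    constructor
    · rintro ⟨x, hx, y, hy, hseg⟩
      rw [segment_eq_image] at hseg
      obtain ⟨θ, hθ, rfl⟩ := hseg
      exact ⟨(θ, x, y), ⟨hθ, hx, hy⟩, rfl⟩
    · rintro ⟨⟨θ, x, y⟩, ⟨hθ, hx, hy⟩, rfl⟩
      refine ⟨x, hx, y, hy, ?_⟩
      rw [segment_eq_image]
      exact ⟨θ, hθ, rfl⟩
  rw [heq]
  refine (isCompact_Icc.prod (hKc.prod hLc.neg)).image ?_
  fun_prop

end EgAux

section Euclidean

variable {n : ℕ}

lemma zero_mem_polarBody (A : Set (EuclideanSpace ℝ (Fin n))) : 0 ∈ polarBody A := by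
  intro x hx
  rw [inner_zero_right]
  norm_num

lemma polarBody_convex (A : Set (EuclideanSpace ℝ (Fin n))) : Convex ℝ (polarBody A) := by
  intro y₁ h₁ y₂ h₂ a b ha hb hab x hx
  have e : ⟪x, a • y₁ + b • y₂⟫ = a * ⟪x, y₁⟫ + b * ⟪x, y₂⟫ := by
    rw [inner_add_right, real_inner_smul_right, real_inner_smul_right]
  have e1 := h₁ x hx
  have e2 := h₂ x hx
  show ⟪x, a • y₁ + b • y₂⟫ ≤ 1
  rw [e]
  nlinarith

lemma isClosed_polarBody (A : Set (EuclideanSpace ℝ (Fin n))) : IsClosed (polarBody A) := by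
  have heq : polarBody A = ⋂ x ∈ A, {y : EuclideanSpace ℝ (Fin n) | ⟪x, y⟫ ≤ 1} := by
    ext y
    simp [polarBody]
  rw [heq]
  exact isClosed_biInter fun x _ =>
    isClosed_le (Continuous.inner continuous_const continuous_id) continuous_const

/-- Separation: if `z ∉ s • K` then some `u` in the polar body has `⟪u, z⟫ > s`. -/
lemma sep_polar {K : Set (EuclideanSpace ℝ (Fin n))} (hKc : IsCompact K) (hKconv : Convex ℝ K)
    (hK0 : (0 : EuclideanSpace ℝ (Fin n)) ∈ K) {z : EuclideanSpace ℝ (Fin n)} {s : ℝ}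
    (hs : 0 ≤ s) (hz0 : z ≠ 0) (hz : 0 < s → z ∉ s • K) :
    ∃ u ∈ polarBody K, s < ⟪u, z⟫ := by
  rcases hs.eq_or_lt with rfl | hspos
  · obtain ⟨R, hR0, hR⟩ : ∃ R : ℝ, 0 < R ∧ K ⊆ Metric.closedBall 0 R := by
      obtain ⟨R, hR⟩ := hKc.isBounded.subset_closedBall 0
      exact ⟨max R 1, lt_of_lt_of_le one_pos (le_max_right R 1),
        hR.trans (Metric.closedBall_subset_closedBall (le_max_left R 1))⟩
    have hzn : 0 < ‖z‖ := norm_pos_iff.2 hz0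
    refine ⟨(R * ‖z‖)⁻¹ • z, ?_, ?_⟩
    · intro x hx
      rw [real_inner_smul_right]
      have h1 : ⟪x, z⟫ ≤ ‖x‖ * ‖z‖ := real_inner_le_norm x z
      have h2 : ‖x‖ ≤ R := by simpa using Metric.mem_closedBall.1 (hR hx)
      have h3 : ⟪x, z⟫ ≤ R * ‖z‖ := h1.trans (by nlinarith)
      rw [inv_mul_le_iff₀ (by positivity)]
      nlinarith
    · rw [real_inner_smul_left, real_inner_self_eq_norm_sq]
      positivity
  · have hzK := hz hspos
    have hcl : IsClosed (s • K) := (hKc.smul s).isClosed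
    have hcv : Convex ℝ (s • K) := hKconv.smul s
    obtain ⟨f, c, hfc, hcz⟩ := geometric_hahn_banach_closed_point hcv hcl hzK
    have h0c : 0 < c := by
      have := hfc 0 ⟨0, hK0, smul_zero s⟩
      simpa using this
    set w := (InnerProductSpace.toDual ℝ (EuclideanSpace ℝ (Fin n))).symm f with hw
    have hwx : ∀ x, ⟪w, x⟫ = f x := fun x => InnerProductSpace.toDual_symm_apply
    refine ⟨(s / c) • w, ?_, ?_⟩
    · intro x hx
      have hfx : s * f x < c := by
        have := hfc (s • x) (smul_mem_smul_set hx)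
        simpa using this
      have heq : ⟪x, (s / c) • w⟫ = s / c * f x := by
        rw [real_inner_smul_right, real_inner_comm, hwx]
      rw [heq, div_mul_eq_mul_div, div_le_one h0c]
      linarith
    · rw [real_inner_smul_left, hwx]
      calc s = (s / c) * c := by field_simp
        _ < (s / c) * f z := by
            apply mul_lt_mul_of_pos_left hcz (by positivity)

lemma polar_decomp {K L : Set (EuclideanSpace ℝ (Fin n))}
    (hKc : IsCompact K) (hKconv : Convex ℝ K) (hK0 : (0 : EuclideanSpace ℝ (Fin n)) ∈ K)
    (hLc : IsCompact L) (hLconv : Convex ℝ L) (hL0 : (0 : EuclideanSpace ℝ (Fin n)) ∈ L)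
    {z : EuclideanSpace ℝ (Fin n)} {ρ s : ℝ} (hρ : 0 < ρ) (hρs : ρ < s)
    (hz : z ∈ ρ • polarBody (polarBody K + polarBody L)) :
    ∃ r₁ r₂ : ℝ, 0 < r₁ ∧ 0 < r₂ ∧ r₁ + r₂ ≤ s ∧ z ∈ r₁ • K ∧ z ∈ r₂ • L := by
  by_contra hcon
  push_neg at hcon
  have hbound : ∀ u ∈ polarBody K, ∀ v ∈ polarBody L, ⟪u, z⟫ + ⟪v, z⟫ ≤ ρ := by
    intro u hu v hv
    have hy : ρ⁻¹ • z ∈ polarBody (polarBody K + polarBody L) :=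
      (mem_smul_set_iff_inv_smul_mem₀ hρ.ne' _ _).1 hz
    have huv : u + v ∈ polarBody K + polarBody L := add_mem_add hu hv
    have h1 : ⟪u + v, ρ⁻¹ • z⟫ ≤ 1 := hy (u + v) huv
    rw [real_inner_smul_right, inner_add_left] at h1
    rw [inv_mul_le_iff₀ hρ] at h1
    linarith
  have hz0 : z ≠ 0 := by
    rintro rfl
    exact hcon (s/2) (s/2) (by linarith) (by linarith) (by linarith)
      ⟨0, hK0, smul_zero _⟩ ⟨0, hL0, smul_zero _⟩
  set SK : Set ℝ := {r : ℝ | 0 < r ∧ z ∈ r • K} with hSKdef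
  set SL : Set ℝ := {r : ℝ | 0 < r ∧ z ∈ r • L} with hSLdef
  have hbddK : BddBelow SK := ⟨0, fun r hr => hr.1.le⟩
  have hbddL : BddBelow SL := ⟨0, fun r hr => hr.1.le⟩
  rcases SK.eq_empty_or_nonempty with hSK | hSK
  · obtain ⟨u, hu, hus⟩ := sep_polar hKc hKconv hK0 hρ.le hz0
      (fun _ hmem => (eq_empty_iff_forall_notMem.1 hSK ρ) ⟨hρ, hmem⟩)
    obtain ⟨v, hv, hvs⟩ := sep_polar hLc hLconv hL0 le_rfl hz0 (fun h => absurd h (lt_irrefl 0))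
    linarith [hbound u hu v hv]
  rcases SL.eq_empty_or_nonempty with hSL | hSL
  · obtain ⟨v, hv, hvs⟩ := sep_polar hLc hLconv hL0 hρ.le hz0
      (fun _ hmem => (eq_empty_iff_forall_notMem.1 hSL ρ) ⟨hρ, hmem⟩)
    obtain ⟨u, hu, hus⟩ := sep_polar hKc hKconv hK0 le_rfl hz0 (fun h => absurd h (lt_irrefl 0))
    linarith [hbound u hu v hv]
  set α := sInf SK with hα
  set β := sInf SL with hβ
  have hα0 : 0 ≤ α := le_csInf hSK fun r hr => hr.1.le
  have hβ0 : 0 ≤ β := le_csInf hSL fun r hr => hr.1.le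
  have hαβ : ρ < α + β := by
    by_contra hc
    push_neg at hc
    have hδ : 0 < (s - ρ) / 2 := by linarith
    obtain ⟨r₁, hr₁S, hr₁⟩ := (csInf_lt_iff hbddK hSK).1 (show sInf SK < α + (s - ρ)/2 by
      rw [← hα]; linarith)
    obtain ⟨r₂, hr₂S, hr₂⟩ := (csInf_lt_iff hbddL hSL).1 (show sInf SL < β + (s - ρ)/2 by
      rw [← hβ]; linarith)
    exact hcon r₁ r₂ hr₁S.1 hr₂S.1 (by linarith) hr₁S.2 hr₂S.2
  set m := (ρ + α - β) / 2 with hm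
  set c := max 0 (min ρ m) with hc
  set s₂ := ρ - c with hs₂
  have hc0 : 0 ≤ c := le_max_left _ _
  have hcρ : c ≤ ρ := max_le hρ.le (min_le_left _ _)
  have hs₂0 : 0 ≤ s₂ := by simp only [hs₂]; linarith
  have hcα : 0 < c → c < α := by
    intro h
    by_cases hm1 : min ρ m ≤ 0
    · rw [hc, max_eq_left hm1] at h; linarith
    · push_neg at hm1
      have hceq : c = min ρ m := max_eq_right (le_of_lt hm1)
      rcases le_total m ρ with h2 | h2
      · rw [hceq, min_eq_right h2]; rw [hm]; linarith
      · rw [hceq, min_eq_left h2]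
        have h3 : ρ ≤ m := h2
        rw [hm] at h3; linarith
  have hs₂β : 0 < s₂ → s₂ < β := by
    intro h
    have hclt : c < ρ := by rw [hs₂] at h; linarith
    rcases le_total ρ m with h2 | h2
    · rw [hc, min_eq_left h2, max_eq_right hρ.le] at hclt; linarith
    · by_cases hm1 : m ≤ 0
      · have hceq : c = 0 := by
          rw [hc, min_eq_right h2, max_eq_left hm1]
        rw [hs₂, hceq, sub_zero]
        rw [hm] at hm1; linarith
      · push_neg at hm1
        have hceq : c = m := by
          rw [hc, min_eq_right h2, max_eq_right hm1.le]
        rw [hs₂, hceq, hm]; linarith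
  have hnK : 0 < c → z ∉ c • K := fun h hmem =>
    absurd (csInf_le hbddK ⟨h, hmem⟩) (not_le.2 (hcα h))
  have hnL : 0 < s₂ → z ∉ s₂ • L := fun h hmem =>
    absurd (csInf_le hbddL ⟨h, hmem⟩) (not_le.2 (hs₂β h))
  obtain ⟨u, hu, hus⟩ := sep_polar hKc hKconv hK0 hc0 hz0 hnK
  obtain ⟨v, hv, hvs⟩ := sep_polar hLc hLconv hL0 hs₂0 hz0 hnL
  have hfin := hbound u hu v hv
  rw [hs₂] at hvs
  linarith

end Euclidean

theorem conv_union_polar_sum (n : ℕ)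
    (K L : Set (EuclideanSpace ℝ (Fin n)))
    (hK_compact : IsCompact K) (hK_conv : Convex ℝ K)
    (hK_int : (interior K).Nonempty) (hK0 : (0 : EuclideanSpace ℝ (Fin n)) ∈ K)
    (hL_compact : IsCompact L) (hL_conv : Convex ℝ L)
    (hL_int : (interior L).Nonempty) (hL0 : (0 : EuclideanSpace ℝ (Fin n)) ∈ L) :
    volume (convexHull ℝ (K ∪ (-L))) * volume (polarBody (polarBody K + polarBody L))
      ≤ volume K * volume L := by
  classical
  set C : Set (EuclideanSpace ℝ (Fin n)) := convexHull ℝ (K ∪ -L) with hCdef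
  set M : Set (EuclideanSpace ℝ (Fin n)) := polarBody (polarBody K + polarBody L) with hMdef
  have hCconv : Convex ℝ C := convex_convexHull ℝ _
  have hC0 : (0 : EuclideanSpace ℝ (Fin n)) ∈ C := subset_convexHull ℝ _ (Or.inl hK0)
  have hCc : IsCompact C :=
    isCompact_convexHull_union hK_compact hL_compact hK_conv hL_conv ⟨0, hK0⟩ ⟨0, hL0⟩
  have hCm : MeasurableSet C := hCc.isClosed.measurableSet
  have hMconv : Convex ℝ M := polarBody_convex _
  have hM0 : (0 : EuclideanSpace ℝ (Fin n)) ∈ M := zero_mem_polarBody _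
  have hMm : MeasurableSet M := (isClosed_polarBody _).measurableSet
  have hKm : MeasurableSet K := hK_compact.isClosed.measurableSet
  have hLm : MeasurableSet L := hL_compact.isClosed.measurableSet
  set cn : ℝ≥0∞ :=
    ENNReal.ofReal (Nat.factorial (finrank ℝ (EuclideanSpace ℝ (Fin n))) : ℝ) with hcn
  have hcn0 : cn ≠ 0 :=
    (ENNReal.ofReal_pos.2 (by exact_mod_cast Nat.factorial_pos _)).ne'
  have hcnt : cn ≠ ⊤ := ENNReal.ofReal_ne_top
  have IKeq := lintegral_egAux volume hK_conv hK0 hKm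
  have ILeq := lintegral_egAux volume hL_conv hL0 hLm
  have ICeq := lintegral_egAux volume hCconv hC0 hCm
  have IMeq := lintegral_egAux volume hMconv hM0 hMm
  set J : ℝ≥0∞ := ∫⁻ z, egAux K z * egAux L z with hJ
  have hJle : J ≤ ∫⁻ x, egAux K x := by
    refine lintegral_mono fun z => ?_
    calc egAux K z * egAux L z ≤ egAux K z * 1 := mul_le_mul_right (egAux_le_one _) _
      _ = egAux K z := mul_one _
  have hIKne : (∫⁻ x, egAux K x) ≠ ⊤ := by
    rw [IKeq]
    exact ENNReal.mul_ne_top hcnt hK_compact.measure_lt_top.ne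
  have hJne : J ≠ ⊤ := (lt_of_le_of_lt hJle (lt_top_iff_ne_top.2 hIKne)).ne
  have hptM : ∀ z, egAux M z ≤ egAux K z * egAux L z := by
    intro z
    refine iSup_le fun ρ => iSup_le fun hρ => iSup_le fun hz => ?_
    refine ofReal_exp_le_of_forall_lt fun s hs => ?_
    obtain ⟨r₁, r₂, h1, h2, h3, h4, h5⟩ :=
      polar_decomp hK_compact hK_conv hK0 hL_compact hL_conv hL0 hρ hs hz
    calc ENNReal.ofReal (Real.exp (-s))
        ≤ ENNReal.ofReal (Real.exp (-r₁) * Real.exp (-r₂)) := by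
          rw [← Real.exp_add]
          exact ENNReal.ofReal_le_ofReal (Real.exp_le_exp.2 (by linarith))
      _ = ENNReal.ofReal (Real.exp (-r₁)) * ENNReal.ofReal (Real.exp (-r₂)) :=
          ENNReal.ofReal_mul (Real.exp_pos _).le
      _ ≤ egAux K z * egAux L z := mul_le_mul' (le_egAux h1 h4) (le_egAux h2 h5)
  have hJlow : cn * volume M ≤ J := by
    rw [← IMeq]
    exact lintegral_mono hptM
  have hstepb : ∀ d, egAux C d * J ≤ ∫⁻ w, egAux K (w + d) * egAux L w := by
    intro d
    rw [egAux, ENNReal.iSup_mul]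
    refine iSup_le fun ρ => ?_
    rw [ENNReal.iSup_mul]
    refine iSup_le fun hρ => ?_
    rw [ENNReal.iSup_mul]
    refine iSup_le fun hd => ?_
    obtain ⟨a, b, u, v, ha, hb, hab, hu, hv, hduv⟩ := C_decomp hK_conv hL_conv hK0 hL0 hρ hd
    calc ENNReal.ofReal (Real.exp (-ρ)) * J
        = ∫⁻ z, ENNReal.ofReal (Real.exp (-ρ)) * (egAux K z * egAux L z) :=
          (lintegral_const_mul' _ _ ENNReal.ofReal_ne_top).symm
      _ ≤ ∫⁻ z, egAux K (z + u) * egAux L (z + v) := by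
          refine lintegral_mono fun z => ?_
          have hρab : ENNReal.ofReal (Real.exp (-ρ))
              = ENNReal.ofReal (Real.exp (-a)) * ENNReal.ofReal (Real.exp (-b)) := by
            rw [← ENNReal.ofReal_mul (Real.exp_pos _).le, ← Real.exp_add, ← hab]
            ring_nf
          rw [hρab]
          calc ENNReal.ofReal (Real.exp (-a)) * ENNReal.ofReal (Real.exp (-b))
                * (egAux K z * egAux L z)
              = (ENNReal.ofReal (Real.exp (-a)) * egAux K z)
                * (ENNReal.ofReal (Real.exp (-b)) * egAux L z) := by ring
            _ ≤ egAux K (z + u) * egAux L (z + v) :=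
                mul_le_mul' (egAux_mul_le hK_conv ha hu z) (egAux_mul_le hL_conv hb hv z)
      _ = ∫⁻ z, egAux K ((z + v) + d) * egAux L (z + v) := by
          refine lintegral_congr fun z => ?_
          have hzz : z + v + d = z + u := by rw [hduv]; abel
          rw [hzz]
      _ = ∫⁻ w, egAux K (w + d) * egAux L w :=
          lintegral_add_right_eq_self (fun w => egAux K (w + d) * egAux L w) v
  have hkey : (∫⁻ x, egAux C x) * J ≤ (∫⁻ x, egAux K x) * (∫⁻ x, egAux L x) := by
    rw [← lintegral_mul_const' J _ hJne]
    calc ∫⁻ d, egAux C d * J ≤ ∫⁻ d, ∫⁻ w, egAux K (w + d) * egAux L w :=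
          lintegral_mono hstepb
      _ = ∫⁻ w, ∫⁻ d, egAux K (w + d) * egAux L w := by
          apply lintegral_lintegral_swap
          exact (((measurable_egAux hK_conv hK0 hKm).comp (measurable_snd.add measurable_fst)).mul
            ((measurable_egAux hL_conv hL0 hLm).comp measurable_snd)).aemeasurable
      _ = ∫⁻ w, (∫⁻ d, egAux K (w + d)) * egAux L w := by
          refine lintegral_congr fun w => ?_
          rw [lintegral_mul_const' _ _ (ne_top_of_le_ne_top ENNReal.one_ne_top (egAux_le_one w))]
      _ = ∫⁻ w, (∫⁻ x, egAux K x) * egAux L w := by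
          refine lintegral_congr fun w => ?_
          congr 1
          have : (fun d => egAux K (w + d)) = fun d => egAux K (d + w) := by
            funext d; rw [add_comm]
          rw [this]
          exact lintegral_add_right_eq_self (egAux K) w
      _ = (∫⁻ x, egAux K x) * (∫⁻ x, egAux L x) := lintegral_const_mul' _ _ hIKne
  have hfinal : (cn * volume C) * (cn * volume M) ≤ (cn * volume K) * (cn * volume L) := by
    calc (cn * volume C) * (cn * volume M)
        ≤ (∫⁻ x, egAux C x) * J := by
          rw [ICeq]
          exact mul_le_mul_right hJlow _
      _ ≤ (∫⁻ x, egAux K x) * (∫⁻ x, egAux L x) := hkey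
      _ = (cn * volume K) * (cn * volume L) := by rw [IKeq, ILeq]
  have hfinal2 : (cn * cn) * (volume C * volume M) ≤ (cn * cn) * (volume K * volume L) := by
    calc (cn * cn) * (volume C * volume M) = (cn * volume C) * (cn * volume M) :=
          mul_mul_mul_comm cn cn (volume C) (volume M)
      _ ≤ (cn * volume K) * (cn * volume L) := hfinal
      _ = (cn * cn) * (volume K * volume L) := mul_mul_mul_comm cn (volume K) cn (volume L)
  exact (ENNReal.mul_le_mul_iff_right (mul_ne_zero hcn0 hcn0) (ENNReal.mul_ne_top hcnt hcnt)).1 hfinal2
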